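/- Let T : 𝒳 → 𝒳 be a measurable map pushing P_X forward to P_Y and satisfying ∫ d^p(x, T(x)) dP_X(x) = W_p^p(P_X, P_Y; d) (i.e., T is an optimal transport map). Define w(t) as the law of (1−t)·id + t·T pushed forward from P_X (when 𝒳 is a convex subset of a normed space and d is the norm distance). Then W_p(w(0), w(1)) = (∫ ‖x − T(x)‖^p dP_X(x))^{1/p} and W_p(w(t), w(t')) ≤ |t−t'| W_p(w(0), w(1)) for all t, t' ∈ [0,1]; combined with the triangle inequality this yields W_p(w(t), w(t')) = |t−t'| W_p(w(0), w(1)), so w is a constant-speed geodesic (McCann's interpolant). -/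

import Mathlib

open MeasureTheory ENNReal

/-- `π` is a coupling of `P` and `Q`: its marginals are `P` and `Q`. -/
def IsCoupling {X Y : Type*} [MeasurableSpace X] [MeasurableSpace Y]
    (π : Measure (X × Y)) (P : Measure X) (Q : Measure Y) : Prop :=
  π.map Prod.fst = P ∧ π.map Prod.snd = Q

/-- Infimal transport cost over all couplings of `P` and `Q` for the cost `ρ`. -/
noncomputable def WpPow {X : Type*} [MeasurableSpace X]
    (ρ : X → X → ℝ≥0∞) (P Q : Measure X) : ℝ≥0∞ :=
  ⨅ π : {π : Measure (X × X) // IsCoupling π P Q}, ∫⁻ z, ρ z.1 z.2 ∂π.1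

/-- The `p`-Wasserstein distance. -/
noncomputable def Wp {X : Type*} [MeasurableSpace X] [PseudoEMetricSpace X]
    (p : ℝ) (P Q : Measure X) : ℝ≥0∞ :=
  (WpPow (fun x y => edist x y ^ p) P Q) ^ (1 / p)

section Aux

open ProbabilityTheory

variable {X : Type*} [MeasurableSpace X]

lemma WpPow_le_coupling {ρ : X → X → ℝ≥0∞} {P Q : Measure X} {π : Measure (X × X)}
    (h : IsCoupling π P Q) : WpPow ρ P Q ≤ ∫⁻ z, ρ z.1 z.2 ∂π :=
  iInf_le (fun π : {π : Measure (X × X) // IsCoupling π P Q} => ∫⁻ z, ρ z.1 z.2 ∂π.1) ⟨π, h⟩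

lemma isCoupling_map_pair {P : Measure X} {f g : X → X} (hf : Measurable f)
    (hg : Measurable g) :
    IsCoupling (P.map fun x => (f x, g x)) (P.map f) (P.map g) := by
  constructor
  · rw [Measure.map_map measurable_fst (hf.prodMk hg)]; rfl
  · rw [Measure.map_map measurable_snd (hf.prodMk hg)]; rfl

variable [PseudoEMetricSpace X] [OpensMeasurableSpace X] [SecondCountableTopology X]

lemma costMeasurable (p : ℝ) : Measurable fun z : X × X => edist z.1 z.2 ^ p :=
  measurable_edist.pow_const p

lemma wpPow_swap_le (p : ℝ) (P Q : Measure X) :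
    WpPow (fun x y => edist x y ^ p) P Q ≤ WpPow (fun x y => edist x y ^ p) Q P := by
  refine le_iInf fun π => ?_
  have hπ : IsCoupling (π.1.map Prod.swap) P Q := by
    obtain ⟨h1, h2⟩ := π.2
    constructor
    · rw [Measure.map_map measurable_fst measurable_swap]; exact h2
    · rw [Measure.map_map measurable_snd measurable_swap]; exact h1
  refine (WpPow_le_coupling hπ).trans_eq ?_
  rw [lintegral_map (costMeasurable p) measurable_swap]
  simp [edist_comm]

lemma Wp_symm (p : ℝ) (P Q : Measure X) : Wp p P Q = Wp p Q P := by
  rw [Wp, Wp, le_antisymm (wpPow_swap_le p P Q) (wpPow_swap_le p Q P)]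

variable [StandardBorelSpace X] [Nonempty X]

/-- Gluing of couplings: the key step in the triangle inequality for `Wp`. -/
lemma glue_couplings (p : ℝ) (hp : 1 ≤ p) {μ ν ρ : Measure X}
    [IsProbabilityMeasure μ] [IsProbabilityMeasure ν] [IsProbabilityMeasure ρ]
    {π₁ π₂ : Measure (X × X)} (h₁ : IsCoupling π₁ μ ν) (h₂ : IsCoupling π₂ ν ρ) :
    ∃ π₃ : Measure (X × X), IsCoupling π₃ μ ρ ∧
      (∫⁻ z, edist z.1 z.2 ^ p ∂π₃) ^ (1 / p) ≤
        (∫⁻ z, edist z.1 z.2 ^ p ∂π₁) ^ (1 / p) +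
        (∫⁻ z, edist z.1 z.2 ^ p ∂π₂) ^ (1 / p) := by
  have hprob : ∀ (π : Measure (X × X)) (m : Measure X), IsProbabilityMeasure m →
      π.map Prod.fst = m → IsProbabilityMeasure π := by
    intro π m hm hmap
    constructor
    have := congrArg (fun m : Measure X => m Set.univ) hmap
    simp only [Measure.map_apply measurable_fst MeasurableSet.univ, Set.preimage_univ] at this
    rw [this, measure_univ]
  haveI hπ₁ : IsProbabilityMeasure π₁ := hprob π₁ μ inferInstance h₁.1
  haveI hπ₂ : IsProbabilityMeasure π₂ := hprob π₂ ν inferInstance h₂.1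
  have hsnd : Measurable (Prod.snd : X × X → X) := measurable_snd
  set κ := π₂.condKernel with hκ
  have hfst : π₂.fst = ν := h₁.2 ▸ h₂.1
  have hdis : ν ⊗ₘ κ = π₂ := by
    conv_rhs => rw [← π₂.disintegrate π₂.condKernel]
    rw [hfst]
  set η : Measure ((X × X) × X) := π₁ ⊗ₘ (κ.comap Prod.snd hsnd) with hη
  have hg23 : Measurable fun z : (X × X) × X => (z.1.2, z.2) :=
    (measurable_snd.comp measurable_fst).prodMk measurable_snd
  have hg13 : Measurable fun z : (X × X) × X => (z.1.1, z.2) :=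
    (measurable_fst.comp measurable_fst).prodMk measurable_snd
  -- the projection onto the second and third coordinates is `π₂`
  have hkey : η.map (fun z : (X × X) × X => (z.1.2, z.2)) = π₂ := by
    ext s hs
    rw [Measure.map_apply hg23 hs, hη, Measure.compProd_apply (hg23 hs)]
    have : ∀ ab : X × X,
        (κ.comap Prod.snd hsnd) ab
          (Prod.mk ab ⁻¹' ((fun z : (X × X) × X => (z.1.2, z.2)) ⁻¹' s))
        = κ ab.2 (Prod.mk ab.2 ⁻¹' s) := by
      intro ab; rfl
    simp_rw [this]
    rw [← hdis, Measure.compProd_apply hs, ← h₁.2,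
      lintegral_map (Kernel.measurable_kernel_prodMk_left hs) measurable_snd]
  -- the projection onto the first two coordinates is `π₁`
  have hfst_eta : η.map Prod.fst = π₁ := by
    have := Measure.fst_compProd π₁ (κ.comap Prod.snd hsnd)
    exact this
  refine ⟨η.map (fun z : (X × X) × X => (z.1.1, z.2)), ⟨?_, ?_⟩, ?_⟩
  · rw [Measure.map_map measurable_fst hg13]
    have : (Prod.fst ∘ fun z : (X × X) × X => (z.1.1, z.2)) =
        (Prod.fst ∘ Prod.fst : (X × X) × X → X) := rfl
    rw [this, ← Measure.map_map measurable_fst measurable_fst, hfst_eta, h₁.1]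
  · rw [Measure.map_map measurable_snd hg13]
    have : (Prod.snd ∘ fun z : (X × X) × X => (z.1.1, z.2)) =
        (Prod.snd ∘ fun z : (X × X) × X => (z.1.2, z.2)) := rfl
    rw [this, ← Measure.map_map measurable_snd hg23, hkey, h₂.2]
  · have hp0 : (0 : ℝ) ≤ p := le_trans zero_le_one hp
    have hcost3 : ∫⁻ z, edist z.1 z.2 ^ p ∂(η.map (fun z : (X × X) × X => (z.1.1, z.2)))
        = ∫⁻ w, edist w.1.1 w.2 ^ p ∂η := by
      rw [lintegral_map (costMeasurable p) hg13]
    have hcost1 : ∫⁻ z, edist z.1 z.2 ^ p ∂π₁ = ∫⁻ w, edist w.1.1 w.1.2 ^ p ∂η := by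
      rw [← hfst_eta, lintegral_map (costMeasurable p) measurable_fst]
    have hcost2 : ∫⁻ z, edist z.1 z.2 ^ p ∂π₂ = ∫⁻ w, edist w.1.2 w.2 ^ p ∂η := by
      rw [← hkey, lintegral_map (costMeasurable p) hg23]
    rw [hcost3, hcost1, hcost2]
    have htri : ∫⁻ w, edist w.1.1 w.2 ^ p ∂η
        ≤ ∫⁻ w, (edist w.1.1 w.1.2 + edist w.1.2 w.2) ^ p ∂η :=
      lintegral_mono fun w => ENNReal.rpow_le_rpow (edist_triangle _ _ _) hp0
    refine (ENNReal.rpow_le_rpow htri (by positivity)).trans ?_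
    exact ENNReal.lintegral_Lp_add_le
      ((measurable_edist.comp ((measurable_fst.comp measurable_fst).prodMk
        (measurable_snd.comp measurable_fst))).aemeasurable)
      ((measurable_edist.comp ((measurable_snd.comp measurable_fst).prodMk
        measurable_snd)).aemeasurable) hp

lemma exists_coupling_close (p : ℝ) (hp : 1 ≤ p) {μ ν : Measure X}
    [IsProbabilityMeasure μ] [IsProbabilityMeasure ν] {δ : ℝ≥0∞} (hδ : δ ≠ 0)
    (hfin : Wp p μ ν < ⊤) :
    ∃ π : Measure (X × X), IsCoupling π μ ν ∧
      (∫⁻ z, edist z.1 z.2 ^ p ∂π) ^ (1 / p) ≤ Wp p μ ν + δ := by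
  have hp0 : p ≠ 0 := by positivity
  have hpow : ((Wp p μ ν + δ) ^ p) ^ (1 / p) = Wp p μ ν + δ := by
    rw [← ENNReal.rpow_mul, mul_one_div, div_self hp0, ENNReal.rpow_one]
  have hlt : WpPow (fun x y => edist x y ^ p) μ ν < (Wp p μ ν + δ) ^ p := by
    have h1 : WpPow (fun x y => edist x y ^ p) μ ν = (Wp p μ ν) ^ p := by
      rw [Wp, ← ENNReal.rpow_mul, one_div, inv_mul_cancel₀ hp0, ENNReal.rpow_one]
    rw [h1]
    exact ENNReal.rpow_lt_rpow (ENNReal.lt_add_right hfin.ne hδ) (by positivity)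
  rw [WpPow, iInf_lt_iff] at hlt
  obtain ⟨⟨π, hπ⟩, hπlt⟩ := hlt
  refine ⟨π, hπ, ?_⟩
  calc (∫⁻ z, edist z.1 z.2 ^ p ∂π) ^ (1 / p)
      ≤ ((Wp p μ ν + δ) ^ p) ^ (1 / p) :=
        ENNReal.rpow_le_rpow hπlt.le (by positivity)
    _ = Wp p μ ν + δ := hpow

/-- Triangle inequality for the Wasserstein distance. -/
lemma Wp_triangle (p : ℝ) (hp : 1 ≤ p) (μ ν ρ : Measure X)
    [IsProbabilityMeasure μ] [IsProbabilityMeasure ν] [IsProbabilityMeasure ρ] :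
    Wp p μ ρ ≤ Wp p μ ν + Wp p ν ρ := by
  refine ENNReal.le_of_forall_pos_le_add fun ε hε htop => ?_
  have hfin1 : Wp p μ ν < ⊤ := lt_of_le_of_lt (le_add_right le_rfl) htop
  have hfin2 : Wp p ν ρ < ⊤ := lt_of_le_of_lt (le_add_left le_rfl) htop
  have hδ : ((ε : ℝ≥0∞) / 2) ≠ 0 := by
    simp [ENNReal.div_eq_zero_iff, (ENNReal.coe_ne_zero).2 hε.ne']
  obtain ⟨π₁, hπ₁, hc₁⟩ := exists_coupling_close p hp hδ hfin1
  obtain ⟨π₂, hπ₂, hc₂⟩ := exists_coupling_close p hp hδ hfin2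
  obtain ⟨π₃, hπ₃, hc₃⟩ := glue_couplings p hp hπ₁ hπ₂
  have : Wp p μ ρ ≤ (∫⁻ z, edist z.1 z.2 ^ p ∂π₃) ^ (1 / p) :=
    ENNReal.rpow_le_rpow (WpPow_le_coupling hπ₃) (by positivity)
  refine this.trans (hc₃.trans ?_)
  calc (∫⁻ z, edist z.1 z.2 ^ p ∂π₁) ^ (1 / p) + (∫⁻ z, edist z.1 z.2 ^ p ∂π₂) ^ (1 / p)
      ≤ (Wp p μ ν + ε / 2) + (Wp p ν ρ + ε / 2) := add_le_add hc₁ hc₂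
    _ = Wp p μ ν + Wp p ν ρ + ε := by
        rw [add_add_add_comm, ENNReal.add_halves]

end Aux

/-- McCann's interpolant: if `T` is an optimal transport map from `P` to `Q` (supported
on a convex subset `K` of Euclidean space), then the curve
`w(t) = ((1−t)·id + t·T)_# P` satisfies `W_p(w 0, w 1) = (∫ ‖x − T(x)‖^p dP)^{1/p}` and
`W_p(w t, w t') = |t − t'| · W_p(w 0, w 1)` for all `t, t' ∈ [0,1]`:
it is a constant-speed geodesic. -/
theorem stmt13 (D : ℕ) (p : ℝ) (hp : 1 ≤ p)
    (K : Set (EuclideanSpace ℝ (Fin D))) (hK : Convex ℝ K)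
    (P Q : Measure (EuclideanSpace ℝ (Fin D)))
    [IsProbabilityMeasure P] [IsProbabilityMeasure Q]
    (hPK : P Kᶜ = 0) (hQK : Q Kᶜ = 0)
    (hPmom : ∫⁻ x, (‖x‖₊ : ℝ≥0∞) ^ p ∂P < ⊤)
    (hQmom : ∫⁻ x, (‖x‖₊ : ℝ≥0∞) ^ p ∂Q < ⊤)
    (T : EuclideanSpace ℝ (Fin D) → EuclideanSpace ℝ (Fin D))
    (hT : Measurable T) (hpush : P.map T = Q)
    (hopt : ∫⁻ x, edist x (T x) ^ p ∂P = WpPow (fun x y => edist x y ^ p) P Q)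
    (w : ℝ → Measure (EuclideanSpace ℝ (Fin D)))
    (hw : w = fun t => P.map (fun x => (1 - t) • x + t • T x)) :
    Wp p (w 0) (w 1) = (∫⁻ x, edist x (T x) ^ p ∂P) ^ (1 / p) ∧
    (∀ t ∈ Set.Icc (0 : ℝ) 1, ∀ t' ∈ Set.Icc (0 : ℝ) 1,
      Wp p (w t) (w t') ≤ ENNReal.ofReal |t - t'| * Wp p (w 0) (w 1)) ∧
    (∀ t ∈ Set.Icc (0 : ℝ) 1, ∀ t' ∈ Set.Icc (0 : ℝ) 1,
      Wp p (w t) (w t') = ENNReal.ofReal |t - t'| * Wp p (w 0) (w 1)) := by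
  have hp0 : (0 : ℝ) < p := lt_of_lt_of_le zero_lt_one hp
  set f : ℝ → EuclideanSpace ℝ (Fin D) → EuclideanSpace ℝ (Fin D) :=
    fun t x => (1 - t) • x + t • T x with hf
  have hfm : ∀ t, Measurable (f t) := fun t => by
    have h1 : Measurable fun x : EuclideanSpace ℝ (Fin D) => (1 - t) • x :=
      measurable_id.const_smul (1 - t)
    have h2 : Measurable fun x : EuclideanSpace ℝ (Fin D) => t • T x := hT.const_smul t
    exact h1.add h2
  have hwt : ∀ t, w t = P.map (f t) := fun t => congrFun hw t
  have hw0 : w 0 = P := by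
    rw [hwt 0]
    have : f 0 = id := by funext x; simp [hf]
    rw [this, Measure.map_id]
  have hw1 : w 1 = Q := by
    rw [hwt 1]
    have : f 1 = T := by funext x; simp [hf]
    rw [this, hpush]
  haveI hwprob : ∀ t, IsProbabilityMeasure (w t) := fun t => by
    rw [hwt t]; exact Measure.isProbabilityMeasure_map (hfm t).aemeasurable
  set I : ℝ≥0∞ := ∫⁻ x, edist x (T x) ^ p ∂P with hI
  -- Part 1
  have part1 : Wp p (w 0) (w 1) = I ^ (1 / p) := by
    rw [hw0, hw1, Wp, ← hopt]
  -- finiteness of I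
  have hIfin : I < ⊤ := by
    have hTQ : ∫⁻ x, (‖T x‖₊ : ℝ≥0∞) ^ p ∂P = ∫⁻ y, (‖y‖₊ : ℝ≥0∞) ^ p ∂Q := by
      rw [← hpush, lintegral_map (measurable_nnnorm.coe_nnreal_ennreal.pow_const p) hT]
    have hbound : ∀ x : EuclideanSpace ℝ (Fin D), edist x (T x) ^ p
        ≤ 2 ^ p * ((‖x‖₊ : ℝ≥0∞) ^ p + (‖T x‖₊ : ℝ≥0∞) ^ p) := by
      intro x
      have h1 : edist x (T x) ≤ (‖x‖₊ : ℝ≥0∞) + (‖T x‖₊ : ℝ≥0∞) := by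
        rw [edist_eq_enorm_sub, enorm_eq_nnnorm]
        exact_mod_cast ENNReal.coe_le_coe.2 (nnnorm_sub_le x (T x))
      calc edist x (T x) ^ p ≤ ((‖x‖₊ : ℝ≥0∞) + (‖T x‖₊ : ℝ≥0∞)) ^ p :=
            ENNReal.rpow_le_rpow h1 hp0.le
        _ ≤ (2 * ((‖x‖₊ : ℝ≥0∞) ⊔ (‖T x‖₊ : ℝ≥0∞))) ^ p := by
            refine ENNReal.rpow_le_rpow ?_ hp0.le
            rw [two_mul]
            exact add_le_add le_sup_left le_sup_right
        _ = 2 ^ p * ((‖x‖₊ : ℝ≥0∞) ⊔ (‖T x‖₊ : ℝ≥0∞)) ^ p :=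
            ENNReal.mul_rpow_of_nonneg _ _ hp0.le
        _ ≤ 2 ^ p * ((‖x‖₊ : ℝ≥0∞) ^ p + (‖T x‖₊ : ℝ≥0∞) ^ p) := by
            gcongr
            rcases le_total (‖x‖₊ : ℝ≥0∞) (‖T x‖₊ : ℝ≥0∞) with h | h
            · rw [sup_eq_right.2 h]; exact le_add_self
            · rw [sup_eq_left.2 h]; exact le_add_right le_rfl
    calc I ≤ ∫⁻ x, 2 ^ p * ((‖x‖₊ : ℝ≥0∞) ^ p + (‖T x‖₊ : ℝ≥0∞) ^ p) ∂P :=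
          lintegral_mono hbound
      _ = 2 ^ p * ((∫⁻ x, (‖x‖₊ : ℝ≥0∞) ^ p ∂P) + ∫⁻ x, (‖T x‖₊ : ℝ≥0∞) ^ p ∂P) := by
          have hm1 : Measurable fun x : EuclideanSpace ℝ (Fin D) => (‖x‖₊ : ℝ≥0∞) ^ p :=
            measurable_nnnorm.coe_nnreal_ennreal.pow_const p
          have hm2 : Measurable fun x : EuclideanSpace ℝ (Fin D) => (‖T x‖₊ : ℝ≥0∞) ^ p :=
            hT.nnnorm.coe_nnreal_ennreal.pow_const p
          rw [lintegral_const_mul (f := fun x => (‖x‖₊ : ℝ≥0∞) ^ p + (‖T x‖₊ : ℝ≥0∞) ^ p) _ (hm1.add hm2), lintegral_add_left hm1]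
      _ < ⊤ := by
          rw [hTQ]
          exact ENNReal.mul_lt_top (ENNReal.rpow_lt_top_of_nonneg hp0.le (by simp))
            (ENNReal.add_lt_top.2 ⟨hPmom, hQmom⟩)
  have hKfin : I ^ (1 / p) < ⊤ :=
    ENNReal.rpow_lt_top_of_nonneg (by positivity) hIfin.ne
  -- the upper bound, for all real t, t'
  have upper : ∀ t t' : ℝ, Wp p (w t) (w t') ≤ ENNReal.ofReal |t - t'| * I ^ (1 / p) := by
    intro t t'
    have hdiff : ∀ x : EuclideanSpace ℝ (Fin D), f t x - f t' x = (t' - t) • (x - T x) := by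
      intro x
      simp only [hf]
      module
    have hed : ∀ x : EuclideanSpace ℝ (Fin D), edist (f t x) (f t' x) = ENNReal.ofReal |t - t'| * edist x (T x) := by
      intro x
      rw [edist_eq_enorm_sub, hdiff x, enorm_smul,
        edist_eq_enorm_sub, Real.enorm_eq_ofReal_abs, abs_sub_comm]
    have hcoupling := isCoupling_map_pair (P := P) (hfm t) (hfm t')
    rw [← hwt t, ← hwt t'] at hcoupling
    have hcost : ∫⁻ z, edist z.1 z.2 ^ p ∂(P.map fun x => (f t x, f t' x))
        = ENNReal.ofReal |t - t'| ^ p * I := by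
      rw [lintegral_map (costMeasurable p) ((hfm t).prodMk (hfm t'))]
      simp only [hed]
      simp_rw [ENNReal.mul_rpow_of_nonneg _ _ hp0.le]
      have hmeas : Measurable fun x : EuclideanSpace ℝ (Fin D) => edist x (T x) ^ p :=
        (measurable_id.edist hT).pow_const p
      rw [lintegral_const_mul _ hmeas]
    have h1 : Wp p (w t) (w t') ≤ (ENNReal.ofReal |t - t'| ^ p * I) ^ (1 / p) := by
      rw [Wp, ← hcost]
      exact ENNReal.rpow_le_rpow (WpPow_le_coupling hcoupling) (by positivity)
    refine h1.trans_eq ?_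
    rw [ENNReal.mul_rpow_of_nonneg _ _ (by positivity), ← ENNReal.rpow_mul,
      mul_one_div, div_self hp0.ne', ENNReal.rpow_one]
  have part2 : ∀ t ∈ Set.Icc (0 : ℝ) 1, ∀ t' ∈ Set.Icc (0 : ℝ) 1,
      Wp p (w t) (w t') ≤ ENNReal.ofReal |t - t'| * Wp p (w 0) (w 1) := by
    intro t _ t' _
    rw [part1]
    exact upper t t'
  -- the lower bound for t ≤ t'
  have lower : ∀ t t' : ℝ, 0 ≤ t → t ≤ t' → t' ≤ 1 →
      ENNReal.ofReal (t' - t) * I ^ (1 / p) ≤ Wp p (w t) (w t') := by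
    intro t t' ht htt' ht'
    have htri : I ^ (1 / p) ≤ ENNReal.ofReal t * I ^ (1 / p) + Wp p (w t) (w t')
        + ENNReal.ofReal (1 - t') * I ^ (1 / p) := by
      calc I ^ (1 / p) = Wp p (w 0) (w 1) := part1.symm
        _ ≤ Wp p (w 0) (w t) + Wp p (w t) (w 1) := Wp_triangle p hp _ _ _
        _ ≤ Wp p (w 0) (w t) + (Wp p (w t) (w t') + Wp p (w t') (w 1)) := by
            gcongr
            exact Wp_triangle p hp _ _ _
        _ ≤ ENNReal.ofReal t * I ^ (1 / p)
            + (Wp p (w t) (w t') + ENNReal.ofReal (1 - t') * I ^ (1 / p)) := by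
            gcongr
            · have := upper 0 t
              rwa [zero_sub, abs_neg, abs_of_nonneg ht] at this
            · have := upper t' 1
              rwa [abs_sub_comm, abs_of_nonneg (by linarith)] at this
        _ = ENNReal.ofReal t * I ^ (1 / p) + Wp p (w t) (w t')
            + ENNReal.ofReal (1 - t') * I ^ (1 / p) := by ring
    set a : ℝ≥0∞ := ENNReal.ofReal t * I ^ (1 / p) + ENNReal.ofReal (1 - t') * I ^ (1 / p)
      with ha
    have hafin : a ≠ ⊤ := by
      rw [ha]
      exact (ENNReal.add_lt_top.2 ⟨ENNReal.mul_lt_top ENNReal.ofReal_lt_top hKfin,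
        ENNReal.mul_lt_top ENNReal.ofReal_lt_top hKfin⟩).ne
    have hsum : a + ENNReal.ofReal (t' - t) * I ^ (1 / p) = I ^ (1 / p) := by
      rw [ha]
      have : ENNReal.ofReal t * I ^ (1 / p) + ENNReal.ofReal (1 - t') * I ^ (1 / p)
          + ENNReal.ofReal (t' - t) * I ^ (1 / p)
          = (ENNReal.ofReal t + ENNReal.ofReal (1 - t') + ENNReal.ofReal (t' - t))
            * I ^ (1 / p) := by ring
      rw [this, ← ENNReal.ofReal_add ht (by linarith), ← ENNReal.ofReal_add (by linarith)
        (by linarith)]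
      have h1 : t + (1 - t') + (t' - t) = 1 := by ring
      rw [h1, ENNReal.ofReal_one, one_mul]
    have h2 : a + ENNReal.ofReal (t' - t) * I ^ (1 / p) ≤ a + Wp p (w t) (w t') := by
      rw [hsum]
      calc I ^ (1 / p) ≤ ENNReal.ofReal t * I ^ (1 / p) + Wp p (w t) (w t')
            + ENNReal.ofReal (1 - t') * I ^ (1 / p) := htri
        _ = a + Wp p (w t) (w t') := by rw [ha]; ring
    exact (ENNReal.add_le_add_iff_left hafin).1 h2
  refine ⟨part1, part2, ?_⟩
  intro t ht t' ht'
  refine le_antisymm (part2 t ht t' ht') ?_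
  rw [part1]
  rcases le_total t t' with h | h
  · have := lower t t' ht.1 h ht'.2
    rwa [abs_sub_comm, abs_of_nonneg (by linarith)]
  · have := lower t' t ht'.1 h ht.2
    rw [abs_of_nonneg (by linarith)]
    rwa [Wp_symm]
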